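/- Let (g_n)_{n∈ℕ} be a family of polynomials g_n ∈ ℂ[ν] such that for every n ≥ 1 the polynomial Σ_{s=1}^{n} C(n,s)·(−μ)^s·g_{n−s}(ν) ∈ ℂ[μ,ν] is divisible by ν. Then for every n ∈ ℕ, g_n is divisible by ν in ℂ[ν]. -/
import Mathlib


open Finset Polynomial

/-- If Σ_{s=1}^n C(n,s)(−μ)^s g_{n−s}(ν) is divisible by ν in ℂ[μ,ν] for every n ≥ 1,
    then every g_n is divisible by ν.  ℂ[μ,ν] is modelled as (ℂ[ν])[μ]. -/
theorem stmt_10 (g : ℕ → Polynomial ℂ)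
    (hg : ∀ n : ℕ, 1 ≤ n →
      (C (X : Polynomial ℂ) : Polynomial (Polynomial ℂ)) ∣
        ∑ s ∈ Icc 1 n, (n.choose s : Polynomial (Polynomial ℂ)) * (-X) ^ s * C (g (n - s))) :
    ∀ n : ℕ, (X : Polynomial ℂ) ∣ g n := by
  intro n
  obtain ⟨q, hq⟩ := hg (n + 1) (Nat.le_add_left 1 n)
  have h1 : (∑ s ∈ Icc 1 (n + 1),
      ((n + 1).choose s : Polynomial (Polynomial ℂ)) * (-X) ^ s * C (g (n + 1 - s))).coeff 1
      = X * q.coeff 1 := by rw [hq, coeff_C_mul]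
  rw [finset_sum_coeff, Finset.sum_eq_single 1] at h1
  · simp only [pow_one, Nat.choose_one_right, Nat.add_sub_cancel] at h1
    rw [show ((n+1 : ℕ) : Polynomial (Polynomial ℂ)) * (-X) * C (g n)
        = C (((n+1:ℕ) : Polynomial ℂ) * g n) * (-X) by
          push_cast [C_mul, C_add, C_1, C_eq_natCast]; ring] at h1
    rw [coeff_C_mul] at h1
    simp only [coeff_neg, coeff_X_one, mul_neg, mul_one] at h1
    have hc : ((n+1 : ℕ) : ℂ) ≠ 0 := by exact_mod_cast Nat.succ_ne_zero n
    refine ⟨C (((n+1:ℕ):ℂ)⁻¹) * (-(q.coeff 1)), ?_⟩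
    calc g n = C (((n+1:ℕ):ℂ)⁻¹) * (((n+1:ℕ):Polynomial ℂ) * g n) := by
          rw [← mul_assoc, ← Polynomial.C_eq_natCast, ← C_mul, inv_mul_cancel₀ hc, C_1, one_mul]
      _ = X * (C (((n+1:ℕ):ℂ)⁻¹) * -(q.coeff 1)) := by
          linear_combination (-(C (((n+1:ℕ):ℂ)⁻¹))) * h1
  · intro s hs hne
    simp only [Finset.mem_Icc] at hs
    have h2 : 2 ≤ s := by omega
    rw [show ((n+1).choose s : Polynomial (Polynomial ℂ)) * (-X) ^ s * C (g (n + 1 - s))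
        = (((-1)^s * ((n+1).choose s : Polynomial ℂ)) • C (g (n + 1 - s))) * X ^ s by
          simp [smul_eq_C_mul]; ring]
    rw [coeff_mul_X_pow']
    simp [Nat.lt_of_lt_of_le one_lt_two h2]
  · simp
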